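/- Let (X, ρ) be a metric space with Borel σ-algebra and λ a σ-finite Borel measure on X, let d ≥ 2, let H be a connected simple graph on {1,…,d}, and let r > 0. For every n with 1 ≤ n ≤ d, the function (g)_n(x_1,…,x_n) = ∫_{X^{d−n}} g^{sym}_{H,r}(x_1,…,x_d) dλ^{⊗(d−n)}(x_{n+1},…,x_d) satisfies ∫_{X^n} (g)_n(x_1,…,x_n)^2 dλ^{⊗n}(x_1,…,x_n) ≤ A_{dr, 2d−n−1}, and moreover A_{dr, 2d−n−1} ≤ B_{dr}^{2d−n−1} · λ(X), where both inequalities are understood in [0, ∞]. -/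

import Mathlib

open Real Finset MeasureTheory ENNReal

/-- `g_{H,r}(x_1,…,x_d) = ∏_{{k,l} ∈ E(H)} 1{ρ(x_k,x_l) ≤ r}`. -/
noncomputable def gGraph {X : Type*} [MetricSpace X] {d : ℕ}
    (H : SimpleGraph (Fin d)) [DecidableRel H.Adj] (r : ℝ) (x : Fin d → X) : ℝ :=
  ∏ k : Fin d, ∏ l : Fin d,
    if H.Adj k l then (if dist (x k) (x l) ≤ r then (1 : ℝ) else 0) else 1

/-- The symmetrization `g^{sym}_{H,r}`. -/
noncomputable def gGraphSym {X : Type*} [MetricSpace X] {d : ℕ}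
    (H : SimpleGraph (Fin d)) [DecidableRel H.Adj] (r : ℝ) (x : Fin d → X) : ℝ :=
  ((d.factorial : ℝ))⁻¹ * ∑ σ : Equiv.Perm (Fin d), gGraph H r (x ∘ σ)

/-- Concatenation of an `n`-tuple and a `(d-n)`-tuple into a `d`-tuple. -/
def combineTuple {X : Type*} {d n : ℕ} (x : Fin n → X) (y : Fin (d - n) → X) : Fin d → X :=
  fun i => if h : (i : ℕ) < n then x ⟨i, h⟩ else y ⟨(i : ℕ) - n, by have := i.isLt; omega⟩

/-- `(g)_n(x_1,…,x_n) = ∫_{X^{d-n}} g^{sym}_{H,r}(x_1,…,x_d) dλ^{⊗(d-n)}(x_{n+1},…,x_d)`,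
as an `[0,∞]`-valued integral. -/
noncomputable def gGraphKernel {X : Type*} [MetricSpace X] [MeasurableSpace X] {d : ℕ}
    (μ : Measure X) (H : SimpleGraph (Fin d)) [DecidableRel H.Adj] (r : ℝ) (n : ℕ)
    (x : Fin n → X) : ℝ≥0∞ :=
  ∫⁻ y : Fin (d - n) → X, ENNReal.ofReal (gGraphSym H r (combineTuple x y))
    ∂(Measure.pi fun _ : Fin (d - n) => μ)

open scoped Classical

lemma gGraph_eq_ite {X : Type*} [MetricSpace X] {d : ℕ} (H : SimpleGraph (Fin d))
    [DecidableRel H.Adj] (r : ℝ) (z : Fin d → X) :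
    gGraph H r z = if ∀ k l, H.Adj k l → dist (z k) (z l) ≤ r then 1 else 0 := by
  by_cases h : ∀ k l, H.Adj k l → dist (z k) (z l) ≤ r
  · rw [if_pos h]
    apply Finset.prod_eq_one
    intro k _
    apply Finset.prod_eq_one
    intro l _
    by_cases ha : H.Adj k l
    · rw [if_pos ha, if_pos (h k l ha)]
    · rw [if_neg ha]
  · rw [if_neg h]
    push_neg at h
    obtain ⟨k, l, ha, hdist⟩ := h
    apply Finset.prod_eq_zero (Finset.mem_univ k)
    apply Finset.prod_eq_zero (Finset.mem_univ l)
    rw [if_pos ha, if_neg (not_le.mpr hdist)]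

lemma dist_le_of_walk {X : Type*} [MetricSpace X] {d : ℕ} {H : SimpleGraph (Fin d)}
    {r : ℝ} {z : Fin d → X} (hc : ∀ k l, H.Adj k l → dist (z k) (z l) ≤ r)
    {a b : Fin d} (w : H.Walk a b) : dist (z a) (z b) ≤ w.length * r := by
  induction w with
  | nil => simp
  | @cons u v t h p ih =>
      calc dist (z u) (z t) ≤ dist (z u) (z v) + dist (z v) (z t) := dist_triangle _ _ _
        _ ≤ r + p.length * r := add_le_add (hc _ _ h) ih
        _ = (SimpleGraph.Walk.cons h p).length * r := by
            rw [SimpleGraph.Walk.length_cons]; push_cast; ring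

lemma pairwise_dist_of_connected {X : Type*} [MetricSpace X] {d : ℕ} {H : SimpleGraph (Fin d)}
    (hH : H.Connected) {r : ℝ} (hr : 0 < r) {z : Fin d → X}
    (hc : ∀ k l, H.Adj k l → dist (z k) (z l) ≤ r) (i j : Fin d) :
    dist (z i) (z j) ≤ (d : ℝ) * r := by
  obtain ⟨w⟩ := hH.preconnected i j
  have h2 : w.bypass.length < d := by
    simpa using (SimpleGraph.Walk.bypass_isPath w).length_lt
  calc dist (z i) (z j) ≤ w.bypass.length * r := dist_le_of_walk hc w.bypass
    _ ≤ (d : ℝ) * r := by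
        apply mul_le_mul_of_nonneg_right _ hr.le
        exact_mod_cast h2.le

lemma gGraphSym_le_ite {X : Type*} [MetricSpace X] {d : ℕ} {H : SimpleGraph (Fin d)}
    [DecidableRel H.Adj] (hH : H.Connected) {r : ℝ} (hr : 0 < r) (z : Fin d → X) :
    ENNReal.ofReal (gGraphSym H r z) ≤
      if ∀ i j, dist (z i) (z j) ≤ (d : ℝ) * r then 1 else 0 := by
  by_cases hP : ∀ i j, dist (z i) (z j) ≤ (d : ℝ) * r
  · rw [if_pos hP, ENNReal.ofReal_le_one]
    unfold gGraphSym
    have hfac : (0 : ℝ) < (d.factorial : ℝ) := by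
      exact_mod_cast d.factorial_pos
    have h1 : ∑ σ : Equiv.Perm (Fin d), gGraph H r (z ∘ σ) ≤ (d.factorial : ℝ) := by
      have : ∑ σ : Equiv.Perm (Fin d), gGraph H r (z ∘ σ) ≤
          ∑ _σ : Equiv.Perm (Fin d), (1 : ℝ) := by
        apply Finset.sum_le_sum
        intro σ _
        rw [gGraph_eq_ite]
        split_ifs <;> norm_num
      simpa [Finset.card_univ, Fintype.card_perm, Fintype.card_fin] using this
    calc ((d.factorial : ℝ))⁻¹ * ∑ σ : Equiv.Perm (Fin d), gGraph H r (z ∘ σ)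
        ≤ (d.factorial : ℝ)⁻¹ * (d.factorial : ℝ) :=
          mul_le_mul_of_nonneg_left h1 (by positivity)
      _ = 1 := inv_mul_cancel₀ hfac.ne'
  · rw [if_neg hP]
    have hz : ∀ σ : Equiv.Perm (Fin d), gGraph H r (z ∘ σ) = 0 := by
      intro σ
      rw [gGraph_eq_ite, if_neg]
      intro hc
      apply hP
      intro i j
      have := pairwise_dist_of_connected hH hr hc (σ.symm i) (σ.symm j)
      simpa using this
    unfold gGraphSym
    rw [Finset.sum_eq_zero (fun σ _ => hz σ), mul_zero]
    simp

lemma my_lintegral_prod_le {α β : Type*} [MeasurableSpace α] [MeasurableSpace β]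
    (μ : Measure α) (ν : Measure β) [SFinite ν] (f : α × β → ENNReal) :
    ∫⁻ z, f z ∂(μ.prod ν) ≤ ∫⁻ x, ∫⁻ y, f (x, y) ∂ν ∂μ := by
  rw [MeasureTheory.lintegral]
  refine iSup₂_le fun g hg => ?_
  calc g.lintegral (μ.prod ν) = ∫⁻ z, g z ∂(μ.prod ν) := (g.lintegral_eq_lintegral _).symm
    _ = ∫⁻ x, ∫⁻ y, g (x, y) ∂ν ∂μ := lintegral_prod _ g.measurable.aemeasurable
    _ ≤ ∫⁻ x, ∫⁻ y, f (x, y) ∂ν ∂μ :=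
        lintegral_mono fun x => lintegral_mono fun y => hg _

/-- Estimate (4.1) of the subgraph-count norms:
`∫_{X^n} (g)_n² dλ^{⊗n} ≤ A_{dr, 2d-n-1}` and `A_{dr,2d-n-1} ≤ B_{dr}^{2d-n-1} λ(X)`,
where `A_{s,k} = ∫ λ(B(x,s))^k dλ(x)` and `B_s = esssup_x λ(B(x,s))`. -/
theorem stmt_3 {X : Type*} [MetricSpace X] [MeasurableSpace X] [BorelSpace X]
    (μ : Measure X) [SigmaFinite μ] (d : ℕ) (hd : 2 ≤ d)
    (H : SimpleGraph (Fin d)) [DecidableRel H.Adj] (hH : H.Connected)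
    (r : ℝ) (hr : 0 < r) (n : ℕ) (hn1 : 1 ≤ n) (hnd : n ≤ d) :
    (∫⁻ x : Fin n → X, (gGraphKernel μ H r n x) ^ 2 ∂(Measure.pi fun _ : Fin n => μ)) ≤
      (∫⁻ x : X, (μ (Metric.closedBall x (d * r))) ^ (2 * d - n - 1) ∂μ) ∧
    (∫⁻ x : X, (μ (Metric.closedBall x (d * r))) ^ (2 * d - n - 1) ∂μ) ≤
      (essSup (fun x : X => μ (Metric.closedBall x (d * r))) μ) ^ (2 * d - n - 1) *
        μ Set.univ := by
  constructor
  · -- main estimate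
    obtain ⟨m, rfl⟩ : ∃ m, n = m + 1 := ⟨n - 1, by omega⟩
    have hmd : m + 1 ≤ d := hnd
    -- kernel bound
    have hker : ∀ x : Fin (m + 1) → X, gGraphKernel μ H r (m + 1) x ≤
        (if ∀ i : Fin (m + 1), dist (x i) (x 0) ≤ (d : ℝ) * r then 1 else 0) *
          μ (Metric.closedBall (x 0) ((d : ℝ) * r)) ^ (d - (m + 1)) := by
      intro x
      have hc1 : ∀ (y : Fin (d - (m + 1)) → X) (i : Fin (m + 1)),
          combineTuple (d := d) x y ⟨(i : ℕ), by omega⟩ = x i := by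
        intro y i
        have hi : ((i : ℕ) : ℕ) < m + 1 := i.isLt
        simp [combineTuple, hi]
      have hc2 : ∀ (y : Fin (d - (m + 1)) → X) (j : Fin (d - (m + 1))),
          combineTuple (d := d) x y ⟨m + 1 + (j : ℕ), by omega⟩ = y j := by
        intro y j
        have hj : ¬ (m + 1 + (j : ℕ) < m + 1) := by omega
        simp [combineTuple, hj]
      have hpt : ∀ y : Fin (d - (m + 1)) → X,
          ENNReal.ofReal (gGraphSym H r (combineTuple x y)) ≤
            (if ∀ i : Fin (m + 1), dist (x i) (x 0) ≤ (d : ℝ) * r then 1 else 0) *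
            (Set.univ.pi fun _ : Fin (d - (m + 1)) =>
              Metric.closedBall (x 0) ((d : ℝ) * r)).indicator (fun _ => 1) y := by
        intro y
        refine (gGraphSym_le_ite hH hr _).trans ?_
        by_cases hP : ∀ i j, dist (combineTuple (d := d) x y i) (combineTuple x y j) ≤
            (d : ℝ) * r
        · have hQ : ∀ i : Fin (m + 1), dist (x i) (x 0) ≤ (d : ℝ) * r := by
            intro i
            have h := hP ⟨(i : ℕ), by omega⟩ ⟨((0 : Fin (m + 1)) : ℕ), by omega⟩
            rwa [hc1 y i, hc1 y 0] at h
          have hmem : y ∈ Set.univ.pi fun _ : Fin (d - (m + 1)) =>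
              Metric.closedBall (x 0) ((d : ℝ) * r) := by
            rw [Set.mem_univ_pi]
            intro j
            rw [Metric.mem_closedBall]
            have h := hP ⟨m + 1 + (j : ℕ), by omega⟩ ⟨((0 : Fin (m + 1)) : ℕ), by omega⟩
            rwa [hc2 y j, hc1 y 0] at h
          rw [if_pos hP, if_pos hQ, Set.indicator_of_mem hmem, mul_one]
        · rw [if_neg hP]
          exact zero_le
      calc gGraphKernel μ H r (m + 1) x
          = ∫⁻ y : Fin (d - (m + 1)) → X, ENNReal.ofReal (gGraphSym H r (combineTuple x y))
              ∂(Measure.pi fun _ => μ) := rfl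
        _ ≤ ∫⁻ y : Fin (d - (m + 1)) → X,
              (if ∀ i : Fin (m + 1), dist (x i) (x 0) ≤ (d : ℝ) * r then 1 else 0) *
              (Set.univ.pi fun _ : Fin (d - (m + 1)) =>
                Metric.closedBall (x 0) ((d : ℝ) * r)).indicator (fun _ => 1) y
              ∂(Measure.pi fun _ => μ) := lintegral_mono hpt
        _ = (if ∀ i : Fin (m + 1), dist (x i) (x 0) ≤ (d : ℝ) * r then 1 else 0) *
              ∫⁻ y : Fin (d - (m + 1)) → X,
              (Set.univ.pi fun _ : Fin (d - (m + 1)) =>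
                Metric.closedBall (x 0) ((d : ℝ) * r)).indicator (fun _ => 1) y
              ∂(Measure.pi fun _ => μ) := by
            apply lintegral_const_mul'
            split_ifs <;> simp
        _ = (if ∀ i : Fin (m + 1), dist (x i) (x 0) ≤ (d : ℝ) * r then 1 else 0) *
              μ (Metric.closedBall (x 0) ((d : ℝ) * r)) ^ (d - (m + 1)) := by
            rw [lintegral_indicator (MeasurableSet.univ_pi fun _ => Metric.isClosed_closedBall.measurableSet)]
            rw [setLIntegral_one, Measure.pi_pi]
            simp
    -- squared kernel bound
    have hsq : ∀ x : Fin (m + 1) → X, (gGraphKernel μ H r (m + 1) x) ^ 2 ≤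
        (if ∀ i : Fin (m + 1), dist (x i) (x 0) ≤ (d : ℝ) * r then 1 else 0) *
          μ (Metric.closedBall (x 0) ((d : ℝ) * r)) ^ ((d - (m + 1)) * 2) := by
      intro x
      calc (gGraphKernel μ H r (m + 1) x) ^ 2
          ≤ ((if ∀ i : Fin (m + 1), dist (x i) (x 0) ≤ (d : ℝ) * r then 1 else 0) *
              μ (Metric.closedBall (x 0) ((d : ℝ) * r)) ^ (d - (m + 1))) ^ 2 := by
            rw [sq, sq]; exact mul_le_mul' (hker x) (hker x)
        _ = (if ∀ i : Fin (m + 1), dist (x i) (x 0) ≤ (d : ℝ) * r then 1 else 0) *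
              μ (Metric.closedBall (x 0) ((d : ℝ) * r)) ^ ((d - (m + 1)) * 2) := by
            rw [mul_pow, ← pow_mul]
            congr 1
            split_ifs <;> simp
    -- change of variables
    set e := MeasurableEquiv.piFinSuccAbove (fun _ : Fin (m + 1) => X) 0 with he
    set G : X × (Fin m → X) → ℝ≥0∞ := fun p =>
      (Set.univ.pi fun _ : Fin m => Metric.closedBall p.1 ((d : ℝ) * r)).indicator
        (fun _ => 1) p.2 * μ (Metric.closedBall p.1 ((d : ℝ) * r)) ^ ((d - (m + 1)) * 2)
      with hGdef
    have heapp : ∀ x : Fin (m + 1) → X, e x = (x 0, fun j => x ((0 : Fin (m + 1)).succAbove j)) := by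
      intro x
      rfl
    have hGx : ∀ x : Fin (m + 1) → X,
        (if ∀ i : Fin (m + 1), dist (x i) (x 0) ≤ (d : ℝ) * r then 1 else 0) *
          μ (Metric.closedBall (x 0) ((d : ℝ) * r)) ^ ((d - (m + 1)) * 2) ≤ G (e x) := by
      intro x
      rw [heapp x, hGdef]
      by_cases hQ : ∀ i : Fin (m + 1), dist (x i) (x 0) ≤ (d : ℝ) * r
      · rw [if_pos hQ, one_mul]
        have hmem : (fun j : Fin m => x ((0 : Fin (m + 1)).succAbove j)) ∈
            Set.univ.pi fun _ : Fin m => Metric.closedBall (x 0) ((d : ℝ) * r) := by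
          rw [Set.mem_univ_pi]
          intro j
          rw [Metric.mem_closedBall]
          exact hQ _
        simp only [Set.indicator_of_mem hmem, one_mul]
        exact le_rfl
      · rw [if_neg hQ, zero_mul]
        exact zero_le
    -- put things together
    have hexp : (d - (m + 1)) * 2 + m = 2 * d - (m + 1) - 1 := by omega
    calc (∫⁻ x : Fin (m + 1) → X, (gGraphKernel μ H r (m + 1) x) ^ 2
            ∂(Measure.pi fun _ : Fin (m + 1) => μ))
        ≤ ∫⁻ x : Fin (m + 1) → X, G (e x) ∂(Measure.pi fun _ : Fin (m + 1) => μ) :=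
          lintegral_mono fun x => (hsq x).trans (hGx x)
      _ = ∫⁻ p : X × (Fin m → X), G p ∂(μ.prod (Measure.pi fun _ : Fin m => μ)) :=
          (measurePreserving_piFinSuccAbove (fun _ : Fin (m + 1) => μ) 0).lintegral_comp_emb
            (MeasurableEquiv.measurableEmbedding e) G
      _ ≤ ∫⁻ x0 : X, ∫⁻ ys : Fin m → X, G (x0, ys) ∂(Measure.pi fun _ : Fin m => μ) ∂μ :=
          my_lintegral_prod_le _ _ G
      _ = ∫⁻ x0 : X, μ (Metric.closedBall x0 ((d : ℝ) * r)) ^ (2 * d - (m + 1) - 1) ∂μ := by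
          apply lintegral_congr
          intro x0
          have hinner : ∫⁻ ys : Fin m → X, G (x0, ys) ∂(Measure.pi fun _ : Fin m => μ) =
              μ (Metric.closedBall x0 ((d : ℝ) * r)) ^ ((d - (m + 1)) * 2) *
              μ (Metric.closedBall x0 ((d : ℝ) * r)) ^ m := by
            have h1 : ∀ ys : Fin m → X, G (x0, ys) =
                μ (Metric.closedBall x0 ((d : ℝ) * r)) ^ ((d - (m + 1)) * 2) *
                (Set.univ.pi fun _ : Fin m =>
                  Metric.closedBall x0 ((d : ℝ) * r)).indicator (fun _ => 1) ys := by
              intro ys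
              exact mul_comm _ _
            rw [lintegral_congr h1]
            rw [lintegral_const_mul'' _ ((measurable_const.indicator
              (MeasurableSet.univ_pi fun _ => Metric.isClosed_closedBall.measurableSet)).aemeasurable)]
            rw [lintegral_indicator (MeasurableSet.univ_pi fun _ =>
              Metric.isClosed_closedBall.measurableSet), setLIntegral_one, Measure.pi_pi]
            simp
          rw [hinner, ← pow_add, hexp]
  · -- essSup estimate
    have hae : ∀ᵐ x ∂μ, μ (Metric.closedBall x ((d : ℝ) * r)) ^ (2 * d - n - 1) ≤
        (essSup (fun x : X => μ (Metric.closedBall x ((d : ℝ) * r))) μ) ^ (2 * d - n - 1) := by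
      filter_upwards [ENNReal.ae_le_essSup
        (f := fun x : X => μ (Metric.closedBall x ((d : ℝ) * r)))] with x hx
      exact pow_le_pow_left' hx _
    calc (∫⁻ x : X, (μ (Metric.closedBall x ((d : ℝ) * r))) ^ (2 * d - n - 1) ∂μ)
        ≤ ∫⁻ _x : X, (essSup (fun x : X => μ (Metric.closedBall x ((d : ℝ) * r))) μ) ^
            (2 * d - n - 1) ∂μ := lintegral_mono_ae hae
      _ = (essSup (fun x : X => μ (Metric.closedBall x ((d : ℝ) * r))) μ) ^ (2 * d - n - 1) *
            μ Set.univ := lintegral_const _
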